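/- The function F : [0,∞]² → [0,∞] defined by F(x₁, x₂) = 0 if x₁ = 0 and F(x₁, x₂) = 1 if x₁ ≠ 0 is an extended quasi-metric aggregation function on sets, but it is not a separately preserving function between the quantales P₊² and P₊ (equivalently, it fails to be an extended quasi-metric aggregation function on products). -/

import Mathlib

open ENNReal

/-- An extended quasi-metric on `X`. -/
def IsEQMetric {X : Type*} (d : X → X → ℝ≥0∞) : Prop :=
  (∀ x, d x x = 0) ∧ (∀ x y z, d x z ≤ d x y + d y z) ∧
  (∀ x y, d x y = 0 → d y x = 0 → x = y)

/-- The function `F(x₁,x₂) = 0` if `x₁ = 0` and `= 1` otherwise is an extended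
quasi-metric aggregation function on sets, but it is not a separately
preserving function between the quantales `P₊²` and `P₊` (i.e. it does not
send every separated `P₊²`-category to a separated `P₊`-category;
equivalently, it is not an extended quasi-metric aggregation function on
products). -/
theorem stmt13 :
    letI F : ℝ≥0∞ → ℝ≥0∞ → ℝ≥0∞ := fun x₁ _ => if x₁ = 0 then 0 else 1
    -- `F` is an extended quasi-metric aggregation function on sets:
    (∀ (X : Type) (d₁ d₂ : X → X → ℝ≥0∞), IsEQMetric d₁ → IsEQMetric d₂ →
      IsEQMetric (fun x y => F (d₁ x y) (d₂ x y))) ∧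
    -- but `F` is not separately preserving from `P₊²` to `P₊`:
    ¬ (∀ (X : Type) (a : X → X → ℝ≥0∞ × ℝ≥0∞),
        (∀ x, a x x = 0) →
        (∀ x y z, a x y ≤ a x z + a z y) →
        (∀ x y, a x y = 0 → a y x = 0 → x = y) →
          IsEQMetric (fun x y => F (a x y).1 (a x y).2)) := by
  constructor
  · rintro X d₁ d₂ ⟨h₁refl, h₁tri, h₁sep⟩ ⟨_, _, _⟩
    refine ⟨fun x => by simp [h₁refl x], fun x y z => ?_, fun x y hxy hyx => ?_⟩
    · by_cases h : d₁ x z = 0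
      · simp [h]
      · have : d₁ x y ≠ 0 ∨ d₁ y z ≠ 0 := by
          by_contra hc
          push_neg at hc
          exact h (le_antisymm (le_trans (h₁tri x y z) (by simp [hc.1, hc.2])) zero_le)
        rcases this with h' | h'
        · simp only [if_neg h, if_neg h']
          exact le_add_right le_rfl
        · simp only [if_neg h, if_neg h']
          exact le_add_left le_rfl
    · simp only [] at hxy hyx
      by_cases h : d₁ x y = 0
      · by_cases h' : d₁ y x = 0
        · exact h₁sep x y h h'
        · simp [h'] at hyx
      · simp [h] at hxy
  · intro H
    have := H Bool (fun x y => if x = y then 0 else (0, 1))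
      (fun x => by simp)
      (fun x y z => by
        by_cases hxy : x = y
        · simp [hxy]
        · by_cases hxz : x = z
          · subst hxz; simp [hxy]
          · by_cases hzy : z = y
            · subst hzy; simp [hxy]
            · simp [hxy, hxz, hzy])
      (fun x y hxy _ => by
        by_contra h
        simp [h, Prod.ext_iff] at hxy)
    obtain ⟨_, _, hsep⟩ := this
    have : true = false := hsep true false (by simp) (by simp)
    simp at this
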